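/- Let X be a complex inner product space with inner product ⟪·|·⟫, and let x, y ∈ X with x ≠ 0 and y ≠ 0. Then the Law of Cosines, i.e. the equality of complex numbers ‖x − y‖² = ‖x‖² + ‖y‖² − 2·‖x‖·‖y‖·cos(∠(x,y)), holds if and only if ⟪x|y⟫ is a real number (equivalently, the angle ∠(x,y) is real). -/

import Mathlib

/-- The real area hyperbolic cosine, `arcosh x = log (x + √(x² − 1))`. -/
noncomputable def arcosh (x : ℝ) : ℝ := Real.log (x + Real.sqrt (x ^ 2 - 1))

lemma cosh_arcosh {t : ℝ} (ht : 1 ≤ t) : Real.cosh (arcosh t) = t := by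
  have h1 : (0:ℝ) ≤ t ^ 2 - 1 := by nlinarith
  have hs : Real.sqrt (t ^ 2 - 1) ^ 2 = t ^ 2 - 1 := Real.sq_sqrt h1
  have hsn : 0 ≤ Real.sqrt (t ^ 2 - 1) := Real.sqrt_nonneg _
  have hu : 0 < t + Real.sqrt (t ^ 2 - 1) := by nlinarith
  rw [arcosh, Real.cosh_eq, Real.exp_neg, Real.exp_log hu]
  field_simp
  nlinarith

lemma arcosh_nonneg {t : ℝ} (ht : 1 ≤ t) : 0 ≤ arcosh t :=
  Real.log_nonneg (by nlinarith [Real.sqrt_nonneg (t ^ 2 - 1)])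

lemma cosh_half_arcosh {t : ℝ} (ht : 1 ≤ t) :
    Real.cosh (arcosh t / 2) = Real.sqrt ((t + 1) / 2) := by
  have h := Real.cosh_two_mul (arcosh t / 2)
  rw [show 2 * (arcosh t / 2) = arcosh t by ring, cosh_arcosh ht,
    Real.sinh_sq] at h
  have hc : (t + 1) / 2 = Real.cosh (arcosh t / 2) ^ 2 := by linarith
  rw [hc, Real.sqrt_sq (Real.cosh_pos _).le]

lemma sinh_half_arcosh {t : ℝ} (ht : 1 ≤ t) :
    Real.sinh (arcosh t / 2) = Real.sqrt ((t - 1) / 2) := by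
  have h := Real.cosh_two_mul (arcosh t / 2)
  rw [show 2 * (arcosh t / 2) = arcosh t by ring, cosh_arcosh ht,
    Real.cosh_sq] at h
  have hc : (t - 1) / 2 = Real.sinh (arcosh t / 2) ^ 2 := by linarith
  have hn : 0 ≤ Real.sinh (arcosh t / 2) :=
    Real.sinh_nonneg_iff.2 (by linarith [arcosh_nonneg ht])
  rw [hc, Real.sqrt_sq hn]

lemma rsign_mul_abs (r : ℝ) : Real.sign r * |r| = r := by
  rcases lt_trichotomy r 0 with h | h | h
  · rw [Real.sign_of_neg h, abs_of_neg h]; ring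
  · simp [h]
  · rw [Real.sign_of_pos h, abs_of_pos h]; ring

/-- `G₋ = √((r²+s²−1)² + 4s²) − (r²+s²)` for `z = r + i·s`. -/
noncomputable def Gminus (z : ℂ) : ℝ :=
  Real.sqrt ((z.re ^ 2 + z.im ^ 2 - 1) ^ 2 + 4 * z.im ^ 2) - (z.re ^ 2 + z.im ^ 2)

/-- `G₊ = √((r²+s²−1)² + 4s²) + (r²+s²)` for `z = r + i·s`. -/
noncomputable def Gplus (z : ℂ) : ℝ :=
  Real.sqrt ((z.re ^ 2 + z.im ^ 2 - 1) ^ 2 + 4 * z.im ^ 2) + (z.re ^ 2 + z.im ^ 2)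

/-- The complex arcsine: `arcsin(r+is) = ½·(sgn r · arccos G₋ + i · sgn s · arcosh G₊)`. -/
noncomputable def carcsin (z : ℂ) : ℂ :=
  (1 / 2 : ℂ) *
    (((Real.sign z.re * Real.arccos (Gminus z) : ℝ) : ℂ) +
      Complex.I * ((Real.sign z.im * arcosh (Gplus z) : ℝ) : ℂ))

lemma sin_carcsin (z : ℂ) (hz : z.re ^ 2 + z.im ^ 2 ≤ 1) :
    Complex.sin (carcsin z) = z := by
  obtain ⟨r, s⟩ := z
  have hz' : r ^ 2 + s ^ 2 ≤ 1 := hz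
  set q : ℝ := r ^ 2 + s ^ 2 with hq
  have hq0 : 0 ≤ q := by positivity
  set S : ℝ := Real.sqrt ((q - 1) ^ 2 + 4 * s ^ 2) with hSdef
  have hS0 : 0 ≤ S := Real.sqrt_nonneg _
  have hSsq : S ^ 2 = (q - 1) ^ 2 + 4 * s ^ 2 := Real.sq_sqrt (by positivity)
  have hS_le : S ≤ q + 1 := by
    rw [hSdef, show (q-1)^2 + 4*s^2 = (q+1)^2 - 4*r^2 by rw [hq]; ring]
    calc Real.sqrt ((q+1)^2 - 4*r^2) ≤ Real.sqrt ((q+1)^2) :=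
          Real.sqrt_le_sqrt (by nlinarith)
      _ = q + 1 := Real.sqrt_sq (by linarith)
  have hS_ge : 1 - q ≤ S := by
    calc (1 - q : ℝ) = Real.sqrt ((1-q)^2) := (Real.sqrt_sq (by linarith)).symm
      _ ≤ S := Real.sqrt_le_sqrt (by nlinarith)
  have hGm : Gminus ⟨r, s⟩ = S - q := by simp [Gminus, hSdef, hq]
  have hGp : Gplus ⟨r, s⟩ = S + q := by simp [Gplus, hSdef, hq]
  have hGm1 : Gminus ⟨r, s⟩ ≤ 1 := by rw [hGm]; linarith
  have hGm2 : -1 ≤ Gminus ⟨r, s⟩ := by rw [hGm]; linarith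
  have hGp1 : 1 ≤ Gplus ⟨r, s⟩ := by rw [hGp]; linarith
  set A : ℝ := Real.sign r * Real.arccos (Gminus ⟨r, s⟩) with hA
  set B : ℝ := Real.sign s * arcosh (Gplus ⟨r, s⟩) with hB
  clear_value q S A B
  have hre : (carcsin ⟨r, s⟩).re = A / 2 := by
    simp [carcsin, Complex.div_re, ← hA, ← hB]; ring
  have him : (carcsin ⟨r, s⟩).im = B / 2 := by
    simp [carcsin, Complex.div_im, ← hA, ← hB]; ring
  have hsin : Real.sin (A / 2) = Real.sign r * Real.sqrt ((1 - Gminus ⟨r, s⟩) / 2) := by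
    rcases lt_trichotomy r 0 with h | h | h
    · rw [hA, Real.sign_of_neg h, neg_one_mul, neg_div, Real.sin_neg,
        Real.sin_half_eq_sqrt (Real.arccos_nonneg _)
          (by linarith [Real.arccos_le_pi (Gminus ⟨r,s⟩), Real.pi_pos]),
        Real.cos_arccos hGm2 hGm1]
      ring
    · have hsr : Real.sign r = 0 := by rw [h, Real.sign_zero]
      rw [hA, hsr, zero_mul, zero_mul, zero_div, Real.sin_zero]
    · rw [hA, Real.sign_of_pos h, one_mul,
        Real.sin_half_eq_sqrt (Real.arccos_nonneg _)
          (by linarith [Real.arccos_le_pi (Gminus ⟨r,s⟩), Real.pi_pos]),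
        Real.cos_arccos hGm2 hGm1]
      ring
  have hcos : Real.cos (A / 2) = Real.sqrt ((1 + Gminus ⟨r, s⟩) / 2) := by
    have hcosA : Real.cos A = Gminus ⟨r, s⟩ := by
      rcases lt_trichotomy r 0 with h | h | h
      · rw [hA, Real.sign_of_neg h, neg_one_mul, Real.cos_neg,
          Real.cos_arccos hGm2 hGm1]
      · have hsr : Real.sign r = 0 := by rw [h, Real.sign_zero]
        have hS1 : S = q + 1 := by
          have he : (q - 1) ^ 2 + 4 * s ^ 2 = (q + 1) ^ 2 := by
            rw [hq, h]; ring
          rw [hSdef, he, Real.sqrt_sq (by linarith)]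
        rw [hA, hsr, zero_mul, Real.cos_zero, hGm, hS1]; ring
      · rw [hA, Real.sign_of_pos h, one_mul, Real.cos_arccos hGm2 hGm1]
    have hApi : -Real.pi ≤ A ∧ A ≤ Real.pi := by
      have h1 := Real.arccos_nonneg (Gminus ⟨r,s⟩)
      have h2 := Real.arccos_le_pi (Gminus ⟨r,s⟩)
      rcases lt_trichotomy r 0 with h | h | h
      · rw [hA, Real.sign_of_neg h]; constructor <;> nlinarith
      · have hsr : Real.sign r = 0 := by rw [h, Real.sign_zero]
        rw [hA, hsr, zero_mul]
        constructor <;> linarith [Real.pi_pos]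
      · rw [hA, Real.sign_of_pos h]; constructor <;> nlinarith
    rw [Real.cos_half hApi.1 hApi.2, hcosA]
  have hcosh : Real.cosh (B / 2) = Real.sqrt ((Gplus ⟨r, s⟩ + 1) / 2) := by
    rcases lt_trichotomy s 0 with h | h | h
    · rw [hB, Real.sign_of_neg h, neg_one_mul, neg_div, Real.cosh_neg,
        cosh_half_arcosh hGp1]
    · have hss : Real.sign s = 0 := by rw [h, Real.sign_zero]
      have hS1 : S = 1 - q := by
        have he : (q - 1) ^ 2 + 4 * s ^ 2 = (1 - q) ^ 2 := by rw [h]; ring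
        rw [hSdef, he, Real.sqrt_sq (by linarith)]
      rw [hB, hss, zero_mul, zero_div, Real.cosh_zero, hGp, hS1,
        show ((1 - q + q + 1) / 2 : ℝ) = 1 by ring, Real.sqrt_one]
    · rw [hB, Real.sign_of_pos h, one_mul, cosh_half_arcosh hGp1]
  have hsinh : Real.sinh (B / 2) = Real.sign s * Real.sqrt ((Gplus ⟨r, s⟩ - 1) / 2) := by
    rcases lt_trichotomy s 0 with h | h | h
    · rw [hB, Real.sign_of_neg h, neg_one_mul, neg_div, Real.sinh_neg,
        sinh_half_arcosh hGp1]
      ring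
    · have hss : Real.sign s = 0 := by rw [h, Real.sign_zero]
      rw [hB, hss, zero_mul, zero_mul, zero_div, Real.sinh_zero]
    · rw [hB, Real.sign_of_pos h, one_mul, sinh_half_arcosh hGp1]
      ring
  have hprod1 : Real.sin (A / 2) * Real.cosh (B / 2) = r := by
    rw [hsin, hcosh, mul_assoc, ← Real.sqrt_mul (by rw [hGm]; linarith)]
    have he : (1 - Gminus ⟨r, s⟩) / 2 * ((Gplus ⟨r, s⟩ + 1) / 2) = r ^ 2 := by
      rw [hGm, hGp]; linear_combination (-1/4 : ℝ) * hSsq + hq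
    rw [he, Real.sqrt_sq_eq_abs, rsign_mul_abs]
  have hprod2 : Real.cos (A / 2) * Real.sinh (B / 2) = s := by
    rw [hcos, hsinh, mul_comm (Real.sign s) _, ← mul_assoc,
      ← Real.sqrt_mul (by rw [hGm]; linarith)]
    have he : (1 + Gminus ⟨r, s⟩) / 2 * ((Gplus ⟨r, s⟩ - 1) / 2) = s ^ 2 := by
      rw [hGm, hGp]; linear_combination (1/4 : ℝ) * hSsq
    rw [he, Real.sqrt_sq_eq_abs, mul_comm, rsign_mul_abs]
  rw [Complex.sin_eq, hre, him, ← Complex.ofReal_sin, ← Complex.ofReal_cos,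
    ← Complex.ofReal_cosh, ← Complex.ofReal_sinh, ← Complex.ofReal_mul,
    ← Complex.ofReal_mul, hprod1, hprod2, Complex.mk_eq_add_mul_I]

/-- The complex arccosine: `arccos z = π/2 − arcsin z`. -/
noncomputable def carccos (z : ℂ) : ℂ := ((Real.pi / 2 : ℝ) : ℂ) - carcsin z

/-- The angle `∠(x,y) = arccos(⟪x|y⟫ / (‖x‖·‖y‖))` in a complex inner product space. -/
noncomputable def cangleInner {X : Type*} [NormedAddCommGroup X] [InnerProductSpace ℂ X]
    (x y : X) : ℂ :=
  carccos ((inner ℂ x y : ℂ) / ((‖x‖ * ‖y‖ : ℝ) : ℂ))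

lemma cos_carccos (z : ℂ) (hz : z.re ^ 2 + z.im ^ 2 ≤ 1) :
    Complex.cos (carccos z) = z := by
  rw [carccos, Complex.ofReal_div, Complex.ofReal_ofNat,
    Complex.cos_pi_div_two_sub, sin_carcsin z hz]

/-- in a complex inner product space, for `x, y ≠ 0` the Law of Cosines
`‖x − y‖² = ‖x‖² + ‖y‖² − 2·‖x‖·‖y‖·cos(∠(x,y))` holds (as an identity of complex numbers)
iff `⟪x|y⟫` is real. -/
theorem stmt19 {X : Type*} [NormedAddCommGroup X] [InnerProductSpace ℂ X] (x y : X)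
    (hx : x ≠ 0) (hy : y ≠ 0) :
    (((‖x - y‖ ^ 2 : ℝ) : ℂ)
        = ((‖x‖ ^ 2 : ℝ) : ℂ) + ((‖y‖ ^ 2 : ℝ) : ℂ)
          - 2 * ((‖x‖ * ‖y‖ : ℝ) : ℂ) * Complex.cos (cangleInner x y))
      ↔ ((inner ℂ x y : ℂ)).im = 0 := by
  have hxn : (0:ℝ) < ‖x‖ := norm_pos_iff.mpr hx
  have hyn : (0:ℝ) < ‖y‖ := norm_pos_iff.mpr hy
  have hne : ((‖x‖ * ‖y‖ : ℝ) : ℂ) ≠ 0 :=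
    Complex.ofReal_ne_zero.mpr (by positivity)
  set z : ℂ := (inner ℂ x y : ℂ) / ((‖x‖ * ‖y‖ : ℝ) : ℂ) with hzdef
  have habs : ‖z‖ ≤ 1 := by
    rw [hzdef, norm_div, Complex.norm_real, Real.norm_eq_abs, abs_of_pos (by positivity),
      div_le_one (by positivity)]
    exact norm_inner_le_norm x y
  have hz : z.re ^ 2 + z.im ^ 2 ≤ 1 := by
    have h2 : z.re ^ 2 + z.im ^ 2 = ‖z‖ ^ 2 := by
      rw [Complex.sq_norm, Complex.normSq_apply]; ring
    nlinarith [norm_nonneg z]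
  have hcos : Complex.cos (cangleInner x y) = z := by
    rw [cangleInner, ← hzdef, cos_carccos z hz]
  have hmul : 2 * ((‖x‖ * ‖y‖ : ℝ) : ℂ) * z = 2 * (inner ℂ x y : ℂ) := by
    have hx' : (‖x‖:ℂ) ≠ 0 := by exact_mod_cast hxn.ne'
    have hy' : (‖y‖:ℂ) ≠ 0 := by exact_mod_cast hyn.ne'
    rw [hzdef]
    push_cast
    field_simp
  have hn : ‖x - y‖ ^ 2 = ‖x‖ ^ 2 + ‖y‖ ^ 2 - 2 * (inner ℂ x y : ℂ).re := by
    have h := norm_sub_sq (𝕜 := ℂ) x y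
    simp only [RCLike.re_to_complex] at h
    linarith
  rw [hcos, hmul, Complex.ext_iff]
  simp only [Complex.sub_re, Complex.add_re, Complex.ofReal_re, Complex.sub_im,
    Complex.add_im, Complex.ofReal_im, Complex.mul_re, Complex.mul_im]
  rw [show Complex.re 2 = 2 from rfl, show Complex.im 2 = 0 from rfl]
  constructor
  · rintro ⟨-, h2⟩
    linarith
  · intro h
    refine ⟨by rw [hn, h]; ring, by rw [h]; ring⟩
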